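/- The probabilities of disagreement P(Y ≠ Ỹ) and P(Z ≠ Z̃) are both bounded above by (2/p²)(1 − p²)^(N/4). -/

import Mathlib

open MeasureTheory Filter

/-- The Bernoulli(p) measure on `Bool`: `true` has probability `p`. -/
noncomputable def bern (p : ℝ) : Measure Bool :=
  ENNReal.ofReal p • Measure.dirac true + ENNReal.ofReal (1 - p) • Measure.dirac false

/-- The law of a random subset of `{0, …, N}` where each element is included
independently with probability `p`, encoded by indicator functions. -/
noncomputable def prodBern (p : ℝ) (N : ℕ) : Measure (Fin (N + 1) → Bool) :=
  Measure.pi fun _ => bern p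

/-- `n` belongs to the sumset `A + A`, where `A ⊆ {0,…,N}` is encoded by `ω`. -/
def inSumset {N : ℕ} (ω : Fin (N + 1) → Bool) (n : ℕ) : Prop :=
  ∃ a b : Fin (N + 1), ω a = true ∧ ω b = true ∧ (a : ℕ) + (b : ℕ) = n

/-- `Y`: the number of integers in `{0,…,N}` missing from `A + A`. -/
noncomputable def Ycount (N : ℕ) (ω : Fin (N + 1) → Bool) : ℕ :=
  {n : ℕ | n ≤ N ∧ ¬ inSumset ω n}.ncard

/-- `Z`: the number of integers in `{N+1,…,2N}` missing from `A + A`. -/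
noncomputable def Zcount (N : ℕ) (ω : Fin (N + 1) → Bool) : ℕ :=
  {n : ℕ | N + 1 ≤ n ∧ n ≤ 2 * N ∧ ¬ inSumset ω n}.ncard

/-- `W`: the number of integers in `{0,…,2N}` missing from `A + A`. -/
noncomputable def Wcount (N : ℕ) (ω : Fin (N + 1) → Bool) : ℕ :=
  {n : ℕ | n ≤ 2 * N ∧ ¬ inSumset ω n}.ncard

/-- `Ỹ`: the number of integers in `{0,…,⌊N/2⌋}` missing from `A + A`. -/
noncomputable def Ytilde (N : ℕ) (ω : Fin (N + 1) → Bool) : ℕ :=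
  {n : ℕ | n ≤ N / 2 ∧ ¬ inSumset ω n}.ncard

/-- `Z̃`: the number of integers in `{⌊3N/2⌋+1,…,2N}` missing from `A + A`. -/
noncomputable def Ztilde (N : ℕ) (ω : Fin (N + 1) → Bool) : ℕ :=
  {n : ℕ | 3 * N / 2 + 1 ≤ n ∧ n ≤ 2 * N ∧ ¬ inSumset ω n}.ncard

/-- A string of `k` bits has no two consecutive ones. -/
def noTwoOnes {k : ℕ} (x : Fin k → Bool) : Prop :=
  ∀ i : ℕ, ∀ hi : i + 1 < k, ¬(x ⟨i, Nat.lt_of_succ_lt hi⟩ = true ∧ x ⟨i + 1, hi⟩ = true)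

/-- `a_k`: the probability that `k` i.i.d. Bernoulli(p) bits contain no two
consecutive 1's (with `a_0 = 1`). -/
noncomputable def aseq (p : ℝ) (k : ℕ) : ℝ :=
  ((Measure.pi fun _ : Fin k => bern p) {x | noTwoOnes x}).toReal


/-! ### Auxiliary machinery -/

noncomputable def bernW (p : ℝ) : Bool → ENNReal := fun b => if b then .ofReal p else .ofReal (1-p)

lemma bern_singleton (p : ℝ) (b : Bool) : bern p {b} = bernW p b := by
  cases b <;> simp [bern, bernW, Measure.dirac_apply]

instance (p : ℝ) : IsFiniteMeasure (bern p) := by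
  refine ⟨?_⟩
  simp [bern]

lemma bern_prob {p : ℝ} (h0 : 0 ≤ p) (h1 : p ≤ 1) : IsProbabilityMeasure (bern p) := by
  constructor
  simp [bern]
  rw [← ENNReal.ofReal_add h0 (by linarith)]
  norm_num

lemma pi_sum {ι : Type*} [Fintype ι] (p : ℝ) (S : Set (ι → Bool)) :
    (Measure.pi fun _ : ι => bern p) S = ∑ x ∈ S.toFinite.toFinset, ∏ i, bernW p (x i) := by
  classical
  have h1 : S = ⋃ x ∈ S.toFinite.toFinset, {x} := by
    ext y; simp only [Set.mem_iUnion, Set.Finite.mem_toFinset, Set.mem_singleton_iff]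
    constructor
    · exact fun h => ⟨y, h, rfl⟩
    · rintro ⟨x, hx, rfl⟩; exact hx
  conv_lhs => rw [h1]
  rw [measure_biUnion_finset ?_ ?_]
  · refine Finset.sum_congr rfl fun x _ => ?_
    rw [← Set.univ_pi_singleton x, Measure.pi_pi]
    exact Finset.prod_congr rfl fun i _ => bern_singleton p (x i)
  · intro a _ b hb hab
    simp [Set.disjoint_singleton, hab]
  · intro x _; exact measurableSet_singleton x

lemma sum_w_pair (p : ℝ) (h0 : 0 ≤ p) (h1 : p ≤ 1) :
    ∑ g : Bool → Bool, (if ¬(g true = true ∧ g false = true) then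
        bernW p (g true) * bernW p (g false) else 0)
      = ENNReal.ofReal (1 - p^2) := by
  classical
  rw [Fintype.sum_equiv (Equiv.boolArrowEquivProd Bool) _
      (fun (y : Bool × Bool) => if ¬(y.1 = true ∧ y.2 = true) then bernW p y.1 * bernW p y.2 else 0)
      (fun g => by rcases hgt : g true <;> rcases hgf : g false <;>
        simp [Equiv.boolArrowEquivProd, hgt, hgf, mul_comm])]
  rw [Fintype.sum_prod_type]
  simp [Fintype.sum_bool, bernW]
  rw [← ENNReal.ofReal_mul h0, ← ENNReal.ofReal_mul (by linarith : (0:ℝ) ≤ 1 - p),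
    ← ENNReal.ofReal_mul (by linarith : (0:ℝ) ≤ 1 - p),
    ← ENNReal.ofReal_add (by nlinarith) (by nlinarith),
    ← ENNReal.ofReal_add (by nlinarith) (by nlinarith)]
  congr 1; ring

lemma pair_measure (p : ℝ) (h0 : 0 ≤ p) (h1 : p ≤ 1) (m : ℕ) :
    (Measure.pi fun _ : Fin m × Bool => bern p)
      {x | ∀ j : Fin m, ¬(x (j,true) = true ∧ x (j,false) = true)} =
      ENNReal.ofReal (1 - p^2) ^ m := by
  classical
  rw [pi_sum]
  set A : Finset (Bool → Bool) :=
    Finset.univ.filter (fun g => ¬(g true = true ∧ g false = true)) with hA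
  have hsumA : ∑ g ∈ A, bernW p (g true) * bernW p (g false) = ENNReal.ofReal (1 - p^2) := by
    rw [hA, Finset.sum_filter]
    exact sum_w_pair p h0 h1
  have key : ∑ x ∈ ({x | ∀ j : Fin m, ¬(x (j,true) = true ∧ x (j,false) = true)} :
        Set (Fin m × Bool → Bool)).toFinite.toFinset, ∏ i, bernW p (x i)
      = ∑ y ∈ Fintype.piFinset (fun _ : Fin m => A),
          ∏ j, (bernW p (y j true) * bernW p (y j false)) := by
    refine Finset.sum_nbij' (fun x => Function.curry x) (fun y => Function.uncurry y) ?_ ?_ ?_ ?_ ?_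
    · intro x hx
      simp only [Set.Finite.mem_toFinset, Set.mem_setOf_eq] at hx
      simp only [Fintype.mem_piFinset, hA, Finset.mem_filter, Finset.mem_univ, true_and]
      exact fun j => hx j
    · intro y hy
      simp only [Fintype.mem_piFinset, hA, Finset.mem_filter, Finset.mem_univ, true_and] at hy
      simp only [Set.Finite.mem_toFinset, Set.mem_setOf_eq]
      exact fun j => hy j
    · intro x _; rfl
    · intro y _; rfl
    · intro x _
      rw [Fintype.prod_prod_type]
      exact Finset.prod_congr rfl fun j _ => by rw [Fintype.prod_bool]; rfl
  rw [key, ← Finset.prod_univ_sum (fun _ : Fin m => A)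
    (fun _ g => bernW p (g true) * bernW p (g false))]
  rw [Finset.prod_congr rfl fun (j : Fin m) _ => hsumA]
  rw [Finset.prod_const, Finset.card_univ, Fintype.card_fin]

lemma map_comp (p : ℝ) (h0 : 0 ≤ p) (h1 : p ≤ 1) {ι κ : Type*} [Fintype ι] [Fintype κ]
    (e : ι → κ) (he : Function.Injective e) :
    (Measure.pi fun _ : κ => bern p).map (fun ω => ω ∘ e) =
      Measure.pi fun _ : ι => bern p := by
  classical
  haveI := bern_prob h0 h1
  set K := (Set.range e)ᶜ with hK
  let φ : ι ⊕ ↥K ≃ κ :=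
    (Equiv.sumCongr (Equiv.ofInjective e he) (Equiv.refl ↥K)).trans
      (Equiv.Set.sumCompl (Set.range e))
  have hφ : ∀ j : ι, φ (Sum.inl j) = e j := fun j => by
    simp only [φ, Equiv.trans_apply, Equiv.sumCongr_apply, Sum.map_inl]
    rw [Equiv.Set.sumCompl_apply_inl]
    rfl
  have key : (fun ω : κ → Bool => ω ∘ e) ∘ (MeasurableEquiv.piCongrLeft (fun _ : κ => Bool) φ)
      = Prod.fst ∘ (MeasurableEquiv.sumPiEquivProdPi (fun _ : ι ⊕ ↥K => Bool)) := by
    funext z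
    funext j
    have h1 := MeasurableEquiv.piCongrLeft_apply_apply (β := fun _ : κ => Bool) φ z (Sum.inl j)
    simp only [Function.comp_apply, Function.comp]
    rw [← hφ j, h1]
    rfl
  have hmeas1 : Measurable (fun ω : κ → Bool => ω ∘ e) :=
    measurable_pi_lambda _ fun j => measurable_pi_apply (e j)
  calc (Measure.pi fun _ : κ => bern p).map (fun ω => ω ∘ e)
      = (((Measure.pi fun _ : ι ⊕ ↥K => bern p).map
          (MeasurableEquiv.piCongrLeft (fun _ : κ => Bool) φ)).map (fun ω => ω ∘ e)) := by
        rw [Measure.pi_map_piCongrLeft φ (fun _ : κ => bern p)]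
    _ = (Measure.pi fun _ : ι ⊕ ↥K => bern p).map
          ((fun ω : κ → Bool => ω ∘ e) ∘ (MeasurableEquiv.piCongrLeft (fun _ : κ => Bool) φ)) := by
        rw [Measure.map_map hmeas1 (MeasurableEquiv.measurable _)]
    _ = (Measure.pi fun _ : ι ⊕ ↥K => bern p).map
          (Prod.fst ∘ (MeasurableEquiv.sumPiEquivProdPi (fun _ : ι ⊕ ↥K => Bool))) := by rw [key]
    _ = ((Measure.pi fun _ : ι ⊕ ↥K => bern p).map
          (MeasurableEquiv.sumPiEquivProdPi (fun _ : ι ⊕ ↥K => Bool))).map Prod.fst := by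
        rw [Measure.map_map measurable_fst (MeasurableEquiv.measurable _)]
    _ = ((Measure.pi fun _ : ι => bern p).prod (Measure.pi fun _ : ↥K => bern p)).map Prod.fst := by
        rw [(measurePreserving_sumPiEquivProdPi (fun _ : ι ⊕ ↥K => bern p)).map_eq]
    _ = Measure.pi fun _ : ι => bern p := by
        rw [Measure.map_fst_prod]
        simp

lemma missing_bound (p : ℝ) (h0 : 0 ≤ p) (h1 : p ≤ 1) {N n m : ℕ}
    (e : Fin m × Bool → Fin (N+1)) (he : Function.Injective e)
    (hsum : ∀ j : Fin m, ((e (j,true)) : ℕ) + ((e (j,false)) : ℕ) = n) :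
    prodBern p N {ω | ¬ inSumset ω n} ≤ ENNReal.ofReal (1 - p^2) ^ m := by
  classical
  set D : Set (Fin m × Bool → Bool) :=
    {x | ∀ j : Fin m, ¬(x (j,true) = true ∧ x (j,false) = true)} with hD
  have hsub : {ω : Fin (N+1) → Bool | ¬ inSumset ω n} ⊆ (fun ω => ω ∘ e) ⁻¹' D := by
    intro ω hω j hj
    exact hω ⟨e (j,true), e (j,false), hj.1, hj.2, hsum j⟩
  have hmeas : Measurable (fun ω : Fin (N+1) → Bool => ω ∘ e) :=
    measurable_pi_lambda _ fun j => measurable_pi_apply (e j)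
  have hDm : MeasurableSet D := (Set.to_countable D).measurableSet
  calc prodBern p N {ω | ¬ inSumset ω n} ≤ prodBern p N ((fun ω => ω ∘ e) ⁻¹' D) :=
        measure_mono hsub
    _ = ((prodBern p N).map (fun ω => ω ∘ e)) D := (Measure.map_apply hmeas hDm).symm
    _ = (Measure.pi fun _ : Fin m × Bool => bern p) D := by
        rw [prodBern, map_comp p h0 h1 e he]
    _ = ENNReal.ofReal (1 - p^2) ^ m := pair_measure p h0 h1 m

lemma Ydiff {N : ℕ} (ω : Fin (N+1) → Bool) (h : Ycount N ω ≠ Ytilde N ω) :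
    ∃ n ∈ Finset.Icc (N/2+1) N, ¬ inSumset ω n := by
  by_contra hc
  push_neg at hc
  apply h
  unfold Ycount Ytilde
  congr 1
  ext n
  simp only [Set.mem_setOf_eq]
  constructor
  · rintro ⟨hn, hs⟩
    refine ⟨?_, hs⟩
    by_contra hn2
    exact hs (hc n (Finset.mem_Icc.mpr (by omega)))
  · rintro ⟨hn, hs⟩
    exact ⟨by omega, hs⟩

lemma Zdiff {N : ℕ} (ω : Fin (N+1) → Bool) (h : Zcount N ω ≠ Ztilde N ω) :
    ∃ n ∈ Finset.Icc (N+1) (3*N/2), ¬ inSumset ω n := by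
  by_contra hc
  push_neg at hc
  apply h
  unfold Zcount Ztilde
  congr 1
  ext n
  simp only [Set.mem_setOf_eq]
  constructor
  · rintro ⟨h1, h2, hs⟩
    refine ⟨?_, h2, hs⟩
    by_contra hn2
    exact hs (hc n (Finset.mem_Icc.mpr (by omega)))
  · rintro ⟨h1, h2, hs⟩
    exact ⟨by omega, h2, hs⟩

lemma sum_pow_Icc_le (s : ℝ) (hs0 : 0 ≤ s) (hs1 : s < 1) (a b : ℕ) :
    ∑ n ∈ Finset.Icc a b, s ^ n ≤ s ^ a / (1 - s) := by
  have h1s : 0 < 1 - s := by linarith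
  have h2 : ∑ n ∈ Finset.Icc a b, s ^ n = s^a * ∑ i ∈ Finset.range (b+1-a), s ^ i := by
    rw [← Finset.Ico_add_one_right_eq_Icc, Finset.sum_Ico_eq_sum_range, Finset.mul_sum]
    exact Finset.sum_congr rfl fun i _ => pow_add s a i
  rw [h2, div_eq_mul_one_div]
  refine mul_le_mul_of_nonneg_left ?_ (pow_nonneg hs0 a)
  rw [geom_sum_eq (by intro h; rw [h] at hs1; linarith : s ≠ 1)]
  have h3 : (s ^ (b+1-a) - 1)/(s - 1) = (1 - s ^ (b+1-a))/(1-s) := by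
    rw [← neg_div_neg_eq]; ring_nf
  rw [h3, div_le_div_iff₀ h1s h1s]
  nlinarith [pow_nonneg hs0 (b+1-a)]

lemma tail_bound (p : ℝ) (h0 : 0 < p) (h1 : p < 1) (N a b : ℕ) (ha : (N:ℝ) ≤ 2*a) :
    ∑ n ∈ Finset.Icc a b, Real.sqrt (1-p^2) ^ n ≤ 2/p^2 * (1-p^2) ^ ((N:ℝ)/4) := by
  set q : ℝ := 1 - p^2 with hq
  have hq0 : 0 < q := by nlinarith
  have hq1 : q < 1 := by nlinarith
  set s : ℝ := Real.sqrt q with hs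
  have hsq : s^2 = q := Real.sq_sqrt hq0.le
  have hs0 : 0 < s := Real.sqrt_pos.mpr hq0
  have hs1 : s < 1 := by nlinarith [Real.sqrt_nonneg q]
  have step1 : s ^ a ≤ q ^ ((N:ℝ)/4) := by
    have e1 : s ^ a = q ^ ((a:ℝ)/2) := by
      rw [hs, Real.sqrt_eq_rpow, ← Real.rpow_natCast (q ^ ((1:ℝ)/2)) a, ← Real.rpow_mul hq0.le]
      ring_nf
    rw [e1]
    exact Real.rpow_le_rpow_of_exponent_ge hq0 hq1.le (by linarith)
  have step2 : 1 / (1 - s) ≤ 2 / p^2 := by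
    have hps : p^2 ≤ 2 * (1 - s) := by nlinarith
    rw [div_le_div_iff₀ (by linarith) (by positivity)]
    nlinarith
  calc ∑ n ∈ Finset.Icc a b, s ^ n ≤ s ^ a / (1 - s) := sum_pow_Icc_le s hs0.le hs1 a b
    _ = s ^ a * (1 / (1 - s)) := by rw [div_eq_mul_one_div]
    _ ≤ q ^ ((N:ℝ)/4) * (2 / p^2) := by
        refine mul_le_mul step1 step2 (div_nonneg (by norm_num) (by linarith)) (Real.rpow_nonneg hq0.le _)
    _ = 2 / p^2 * q ^ ((N:ℝ)/4) := by ring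

/-- The probabilities of disagreement `P(Y ≠ Ỹ)` and `P(Z ≠ Z̃)` are bounded
above by `(2/p²)(1-p²)^(N/4)`. -/
theorem stmt4 (p : ℝ) (hp0 : 0 < p) (hp1 : p < 1) (N : ℕ) :
    (prodBern p N {ω | Ycount N ω ≠ Ytilde N ω}).toReal ≤
        2 / p ^ 2 * (1 - p ^ 2) ^ ((N : ℝ) / 4) ∧
    (prodBern p N {ω | Zcount N ω ≠ Ztilde N ω}).toReal ≤
        2 / p ^ 2 * (1 - p ^ 2) ^ ((N : ℝ) / 4) := by
  have h0 := hp0.le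
  have h1 := hp1.le
  have hq0 : (0:ℝ) < 1 - p^2 := by nlinarith
  have hq1 : (1:ℝ) - p^2 < 1 := by nlinarith
  set q : ℝ := 1 - p^2 with hqdef
  set s : ℝ := Real.sqrt q with hs
  have hsq : s^2 = q := Real.sq_sqrt hq0.le
  have hs0 : 0 ≤ s := Real.sqrt_nonneg q
  have hs1 : s < 1 := by nlinarith
  have hRHS : 0 ≤ 2 / p^2 * q ^ ((N:ℝ)/4) := by positivity
  constructor
  · -- Y part
    have hsubU : {ω | Ycount N ω ≠ Ytilde N ω} ⊆
        ⋃ n ∈ Finset.Icc (N/2+1) N, {ω : Fin (N+1) → Bool | ¬ inSumset ω n} := by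
      intro ω hω
      obtain ⟨n, hn, hns⟩ := Ydiff ω hω
      exact Set.mem_biUnion hn hns
    have hsum1 : prodBern p N {ω | Ycount N ω ≠ Ytilde N ω}
        ≤ ∑ n ∈ Finset.Icc (N/2+1) N, ENNReal.ofReal (q ^ ((n+1)/2)) := by
      refine le_trans (measure_mono hsubU) (le_trans (measure_biUnion_finset_le _ _)
        (Finset.sum_le_sum fun n hn => ?_))
      rw [Finset.mem_Icc] at hn
      rw [ENNReal.ofReal_pow hq0.le]
      refine missing_bound p h0 h1
        (e := fun jb : Fin ((n+1)/2) × Bool => if jb.2 then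
          (⟨jb.1, by have := jb.1.isLt; omega⟩ : Fin (N+1))
          else ⟨n - jb.1, by have := jb.1.isLt; omega⟩) ?_ ?_
      · rintro ⟨j, b⟩ ⟨k, c⟩ hjk
        have hj := j.isLt; have hk := k.isLt
        cases b <;> cases c <;> simp only [Bool.false_eq_true, if_true, if_false, ite_true,
          ite_false, Fin.mk.injEq] at hjk
        · simp only [Prod.mk.injEq, Fin.ext_iff]; exact ⟨by omega, trivial⟩
        · exact absurd hjk (by omega)
        · exact absurd hjk (by omega)
        · simp only [Prod.mk.injEq, Fin.ext_iff]; exact ⟨by omega, trivial⟩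
      · intro j
        have hj := j.isLt
        simp only [if_true, if_false, ite_true, ite_false, Bool.false_eq_true, Fin.val_mk]
        omega
    refine ENNReal.toReal_le_of_le_ofReal hRHS (le_trans hsum1 ?_)
    rw [← ENNReal.ofReal_sum_of_nonneg (fun n _ => by positivity)]
    refine ENNReal.ofReal_le_ofReal ?_
    calc ∑ n ∈ Finset.Icc (N/2+1) N, q ^ ((n+1)/2)
        ≤ ∑ n ∈ Finset.Icc (N/2+1) N, s ^ n := by
          refine Finset.sum_le_sum fun n _ => ?_
          rw [← hsq, ← pow_mul]
          exact pow_le_pow_of_le_one hs0 hs1.le (by omega)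
      _ ≤ 2/p^2 * q ^ ((N:ℝ)/4) := by
          refine tail_bound p hp0 hp1 N (N/2+1) N ?_
          have hnat : N ≤ 2*(N/2+1) := by omega
          exact_mod_cast hnat
  · -- Z part
    have hsubU : {ω | Zcount N ω ≠ Ztilde N ω} ⊆
        ⋃ n ∈ Finset.Icc (N+1) (3*N/2), {ω : Fin (N+1) → Bool | ¬ inSumset ω n} := by
      intro ω hω
      obtain ⟨n, hn, hns⟩ := Zdiff ω hω
      exact Set.mem_biUnion hn hns
    have hsum1 : prodBern p N {ω | Zcount N ω ≠ Ztilde N ω}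
        ≤ ∑ n ∈ Finset.Icc (N+1) (3*N/2), ENNReal.ofReal (q ^ (N - n/2)) := by
      refine le_trans (measure_mono hsubU) (le_trans (measure_biUnion_finset_le _ _)
        (Finset.sum_le_sum fun n hn => ?_))
      rw [Finset.mem_Icc] at hn
      rw [ENNReal.ofReal_pow hq0.le]
      refine missing_bound p h0 h1
        (e := fun jb : Fin (N - n/2) × Bool => if jb.2 then
          (⟨n - N + jb.1, by have := jb.1.isLt; omega⟩ : Fin (N+1))
          else ⟨N - jb.1, by have := jb.1.isLt; omega⟩) ?_ ?_
      · rintro ⟨j, b⟩ ⟨k, c⟩ hjk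
        have hj := j.isLt; have hk := k.isLt
        cases b <;> cases c <;> simp only [Bool.false_eq_true, if_true, if_false, ite_true,
          ite_false, Fin.mk.injEq] at hjk
        · simp only [Prod.mk.injEq, Fin.ext_iff]; exact ⟨by omega, trivial⟩
        · exact absurd hjk (by omega)
        · exact absurd hjk (by omega)
        · simp only [Prod.mk.injEq, Fin.ext_iff]; exact ⟨by omega, trivial⟩
      · intro j
        have hj := j.isLt
        simp only [if_true, if_false, ite_true, ite_false, Bool.false_eq_true, Fin.val_mk]
        omega
    refine ENNReal.toReal_le_of_le_ofReal hRHS (le_trans hsum1 ?_)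
    rw [← ENNReal.ofReal_sum_of_nonneg (fun n _ => by positivity)]
    refine ENNReal.ofReal_le_ofReal ?_
    calc ∑ n ∈ Finset.Icc (N+1) (3*N/2), q ^ (N - n/2)
        ≤ ∑ n ∈ Finset.Icc (N+1) (3*N/2), s ^ (2*N - n) := by
          refine Finset.sum_le_sum fun n hn => ?_
          rw [Finset.mem_Icc] at hn
          rw [← hsq, ← pow_mul]
          exact pow_le_pow_of_le_one hs0 hs1.le (by omega)
      _ ≤ ∑ k ∈ Finset.Icc (N - N/2) (N - 1), s ^ k := by
          rw [show ∑ n ∈ Finset.Icc (N+1) (3*N/2), s ^ (2*N - n)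
              = ∑ k ∈ (Finset.Icc (N+1) (3*N/2)).image (fun n => 2*N - n), s ^ k from
            (Finset.sum_image ?_).symm]
          · refine Finset.sum_le_sum_of_subset_of_nonneg ?_ (fun k _ _ => pow_nonneg hs0 k)
            intro k hk
            simp only [Finset.mem_image, Finset.mem_Icc] at hk
            obtain ⟨n, hn, rfl⟩ := hk
            simp only [Finset.mem_Icc]
            omega
          · intro a ha b hb hab
            simp only [Finset.mem_coe, Finset.mem_Icc] at ha hb
            omega
      _ ≤ 2/p^2 * q ^ ((N:ℝ)/4) := by
          refine tail_bound p hp0 hp1 N (N - N/2) (N - 1) ?_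
          have hnat : N ≤ 2*(N - N/2) := by omega
          exact_mod_cast hnat
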